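/- Let q be a rational number with q > 1 and let c_1, ..., c_r be nonzero rational numbers. Then the set A = {(l_1,...,l_r) ∈ ℕ^r : c_1 q^{l_1} + ... + c_r q^{l_r} = 0} is a finite union of rectangular cosets in ℕ^r. -/

import Mathlib

/-- A rectangular coset in `ℕ^r`: a set of the form `e₀ + e₁ℕ + ... + e_sℕ`, where
`e₁,...,e_s` are pairwise orthogonal nonzero idempotent (i.e. `0/1`-valued) vectors. -/
def IsRectangularCoset (r : ℕ) (A : Set (Fin r → ℕ)) : Prop :=
  ∃ (s : ℕ) (e₀ : Fin r → ℕ) (e : Fin s → Fin r → ℕ),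
    (∀ j, e j ≠ 0) ∧
    (∀ j x, e j x = 0 ∨ e j x = 1) ∧
    (∀ j j', j ≠ j' → ∀ x, e j x * e j' x = 0) ∧
    A = {v : Fin r → ℕ | ∃ k : Fin s → ℕ, v = fun x => e₀ x + ∑ j : Fin s, k j * e j x}

open Finset

lemma clear_denoms (r : ℕ) (c : Fin r → ℚ) :
    ∃ (d : ℕ) (m : Fin r → ℤ), 0 < d ∧ ∀ i, (m i : ℚ) = c i * d := by
  classical
  refine ⟨∏ j, (c j).den, fun i => (c i).num * ∏ j ∈ univ.erase i, ((c j).den : ℤ), ?_, ?_⟩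
  · exact Finset.prod_pos (fun j _ => (c j).pos)
  · intro i
    have hsplit : (∏ j, ((c j).den : ℚ)) = ((c i).den : ℚ) * ∏ j ∈ univ.erase i, ((c j).den : ℚ) :=
      (Finset.mul_prod_erase univ _ (mem_univ i)).symm
    have hnum : ((c i).num : ℚ) = c i * (c i).den := by
      have h : ((c i).den : ℚ) ≠ 0 := by exact_mod_cast (c i).den_nz
      calc ((c i).num : ℚ) = ((c i).num / (c i).den) * (c i).den := by field_simp
      _ = c i * (c i).den := by rw [Rat.num_div_den]
    push_cast
    rw [hsplit, hnum]; ring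


lemma qden_lt_qnum (q : ℚ) (hq : 1 < q) : (q.den : ℤ) < q.num := by
  have h1 : q * q.den = q.num := by
    have h : (q.den : ℚ) ≠ 0 := by exact_mod_cast q.den_nz
    calc q * q.den = (q.num / q.den) * q.den := by rw [Rat.num_div_den]
    _ = q.num := by field_simp
  have hd : (0:ℚ) < q.den := by exact_mod_cast q.pos
  have : (q.den : ℚ) < q.num := by nlinarith
  exact_mod_cast this

lemma block_sum_zero
    (q : ℚ) (hq : 1 < q) (r : ℕ) (c : Fin r → ℚ)
    (d : ℕ) (m : Fin r → ℤ) (hd : 0 < d) (hm : ∀ i, (m i : ℚ) = c i * d)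
    (S : Finset (Fin r)) (l : Fin r → ℕ)
    (hsum : ∑ i ∈ S, c i * q ^ l i = 0)
    (u W G : ℕ)
    (hu : ∀ i ∈ S, u ≤ l i)
    (hG : (∑ i : Fin r, (m i).natAbs) * q.den ^ W ≤ G)
    (hgap : ∀ i ∈ S, l i ≤ u + W ∨ u + W + G < l i) :
    ∑ i ∈ S.filter (fun i => l i ≤ u + W), c i * q ^ l i = 0 := by
  classical
  set A : ℤ := q.num with hAdef
  set b : ℕ := q.den with hbdef
  have hbpos : 0 < b := q.pos
  have hAb : (b : ℤ) < A := qden_lt_qnum q hq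
  have hA2 : 2 ≤ A := by omega
  have hAne : A ≠ 0 := by omega
  have hqb : q * (b:ℚ) = (A:ℚ) := by
    have h : (b : ℚ) ≠ 0 := by exact_mod_cast q.den_nz
    calc q * (b:ℚ) = ((A:ℚ) / b) * b := by rw [Rat.num_div_den]
    _ = (A:ℚ) := by field_simp
  by_cases hR : (S.filter (fun i => ¬ l i ≤ u + W)) = ∅
  · have hTS : S.filter (fun i => l i ≤ u + W) = S := by
      apply Finset.filter_true_of_mem
      intro i hi
      by_contra h
      exact (Finset.eq_empty_iff_forall_notMem.1 hR i) (Finset.mem_filter.2 ⟨hi, h⟩)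
    rw [hTS]; exact hsum
  · set T := S.filter (fun i => l i ≤ u + W) with hTdef
    set R := S.filter (fun i => ¬ l i ≤ u + W) with hRdef
    set L := u + W + G + 1 + ∑ i ∈ S, l i with hLdef
    have hL : ∀ i ∈ S, l i ≤ L := by
      intro i hi
      have : l i ≤ ∑ i ∈ S, l i := Finset.single_le_sum (fun j _ => Nat.zero_le _) hi
      omega
    have huWL : u + W ≤ L := by omega
    set F : Fin r → ℤ := fun i => m i * A ^ l i * (b:ℤ) ^ (L - l i) with hFdef
    have key : ∀ i ∈ S, c i * q ^ l i * (d * (b:ℚ)^L) = ((F i : ℤ) : ℚ) := by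
      intro i hi
      have h1 : q ^ l i * (b:ℚ) ^ l i = (A:ℚ) ^ l i := by rw [← mul_pow, hqb]
      have h2 : (b:ℚ)^L = (b:ℚ)^(l i) * (b:ℚ)^(L - l i) := by
        rw [← pow_add]; congr 1; have := hL i hi; omega
      have h3 : ((F i : ℤ) : ℚ) = (m i : ℚ) * (A:ℚ) ^ l i * (b:ℚ) ^ (L - l i) := by
        simp only [hFdef]; push_cast; ring
      rw [h3, hm i, ← h1, h2]; ring
    have hFZ : ∑ i ∈ S, F i = 0 := by
      have : ((∑ i ∈ S, F i : ℤ) : ℚ) = 0 := by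
        push_cast
        rw [← Finset.sum_congr rfl key, ← Finset.sum_mul, hsum, zero_mul]
      exact_mod_cast this
    have hsplit : ∑ i ∈ T, F i + ∑ i ∈ R, F i = 0 := by
      rw [hTdef, hRdef, Finset.sum_filter_add_sum_filter_not]; exact hFZ
    have hdvdR : (A^(u+W+G+1) : ℤ) ∣ ∑ i ∈ R, F i := by
      apply Finset.dvd_sum
      intro i hi
      obtain ⟨hiS, hile⟩ := Finset.mem_filter.1 hi
      have hgt : u + W + G < l i := (hgap i hiS).resolve_left hile
      have h1 : (A^(u+W+G+1) : ℤ) ∣ A ^ l i := pow_dvd_pow A (by omega)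
      exact (h1.mul_left (m i)).mul_right _
    have hdvdT : (A^(u+W+G+1) : ℤ) ∣ ∑ i ∈ T, F i := by
      have h : ∑ i ∈ T, F i = -∑ i ∈ R, F i := by omega
      rw [h]; exact hdvdR.neg_right
    set n : ℤ := ∑ i ∈ T, m i * A ^ (l i - u) * (b:ℤ) ^ (u + W - l i) with hndef
    have hNT : ∑ i ∈ T, F i = A^u * (b:ℤ)^(L - (u+W)) * n := by
      rw [hndef, Finset.mul_sum]
      apply Finset.sum_congr rfl
      intro i hi
      obtain ⟨hiS, hile⟩ := Finset.mem_filter.1 hi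
      have hui : u ≤ l i := hu i hiS
      have hiL : l i ≤ L := hL i hiS
      have e1 : A ^ l i = A ^ u * A ^ (l i - u) := by rw [← pow_add]; congr 1; omega
      have e2 : (b:ℤ) ^ (L - l i) = (b:ℤ)^(L - (u+W)) * (b:ℤ) ^ (u + W - l i) := by
        rw [← pow_add]; congr 1; omega
      simp only [hFdef, e1, e2]; ring
    have hcop : IsCoprime (A^(W+G+1)) ((b:ℤ)^(L-(u+W))) := by
      have h : IsCoprime A ((b:ℤ)) := by
        rw [Int.isCoprime_iff_gcd_eq_one]
        simpa [Int.gcd] using q.reduced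
      exact (h.pow : IsCoprime (A^(W+G+1)) ((b:ℤ)^(L-(u+W))))
    have hdvd_n : A^(W+G+1) ∣ (b:ℤ)^(L-(u+W)) * n := by
      have h1 : A^u * A^(W+G+1) = A^(u+W+G+1) := by rw [← pow_add]; congr 1; omega
      have h2 : (A : ℤ)^u * (A^(W+G+1)) ∣ A^u * ((b:ℤ)^(L-(u+W)) * n) := by
        rw [h1, ← mul_assoc, ← hNT]; exact hdvdT
      exact (mul_dvd_mul_iff_left (pow_ne_zero u hAne)).mp h2
    have hdvd_n' : A^(W+G+1) ∣ n := hcop.dvd_of_dvd_mul_left hdvd_n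
    have hn0 : n = 0 := by
      by_contra hn
      set D : ℤ := ∑ i : Fin r, ((m i).natAbs : ℤ) with hDdef
      have h1 : A^(W+G+1) ≤ |n| := Int.le_of_dvd (abs_pos.mpr hn) ((dvd_abs _ _).mpr hdvd_n')
      have h2 : |n| ≤ D * (A^W * (b:ℤ)^W) := by
        calc |n| ≤ ∑ i ∈ T, |m i * A ^ (l i - u) * (b:ℤ) ^ (u + W - l i)| :=
              Finset.abs_sum_le_sum_abs _ _
        _ ≤ ∑ i ∈ T, |m i| * (A^W * (b:ℤ)^W) := by
            apply Finset.sum_le_sum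
            intro i hi
            obtain ⟨hiS, hile⟩ := Finset.mem_filter.1 hi
            have hui : u ≤ l i := hu i hiS
            have hAW : A ^ (l i - u) ≤ A ^ W := pow_le_pow_right₀ (by omega) (by omega)
            have hbW : (b:ℤ) ^ (u + W - l i) ≤ (b:ℤ) ^ W := pow_le_pow_right₀ (by exact_mod_cast hbpos) (by omega)
            have hAp : (0:ℤ) ≤ A ^ (l i - u) := pow_nonneg (by omega) _
            have hbp : (0:ℤ) ≤ (b:ℤ) ^ (u + W - l i) := pow_nonneg (by positivity) _
            rw [abs_mul, abs_mul, abs_pow, abs_pow, abs_of_nonneg (show (0:ℤ) ≤ A by omega),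
              abs_of_nonneg (show (0:ℤ) ≤ (b:ℤ) by positivity)]
            have hmm : A ^ (l i - u) * (b:ℤ) ^ (u + W - l i) ≤ A ^ W * (b:ℤ) ^ W :=
              mul_le_mul hAW hbW hbp (pow_nonneg (by omega) _)
            calc |m i| * A ^ (l i - u) * (b:ℤ) ^ (u + W - l i)
                = |m i| * (A ^ (l i - u) * (b:ℤ) ^ (u + W - l i)) := by ring
            _ ≤ |m i| * (A ^ W * (b:ℤ) ^ W) := mul_le_mul_of_nonneg_left hmm (abs_nonneg _)
        _ ≤ D * (A^W * (b:ℤ)^W) := by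
            rw [← Finset.sum_mul]
            apply mul_le_mul_of_nonneg_right
            · rw [hDdef]
              calc ∑ i ∈ T, |m i| ≤ ∑ i ∈ (Finset.univ : Finset (Fin r)), |m i| :=
                    Finset.sum_le_sum_of_subset_of_nonneg (by intro x hx; exact Finset.mem_univ x)
                      (fun i _ _ => abs_nonneg _)
              _ = ∑ i : Fin r, ((m i).natAbs : ℤ) := by
                  apply Finset.sum_congr rfl; intro i _; rw [Int.abs_eq_natAbs]
            · positivity
      have hAWpos : (0:ℤ) < A^W := pow_pos (by omega) _
      have h3 : A^(G+1) ≤ D * (b:ℤ)^W := by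
        have e : A^(W+G+1) = A^W * A^(G+1) := by rw [← pow_add, show W+(G+1) = W+G+1 by omega]
        rw [e] at h1
        have : A^W * A^(G+1) ≤ A^W * (D * (b:ℤ)^W) := by
          calc A^W * A^(G+1) ≤ |n| := h1
          _ ≤ D * (A^W * (b:ℤ)^W) := h2
          _ = A^W * (D * (b:ℤ)^W) := by ring
        exact le_of_mul_le_mul_left this hAWpos
      have h4 : D * (b:ℤ)^W ≤ (G:ℤ) := by
        calc D * (b:ℤ)^W = (((∑ i : Fin r, (m i).natAbs) * b ^ W : ℕ) : ℤ) := by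
              rw [hDdef]; push_cast; ring
        _ ≤ (G:ℤ) := by exact_mod_cast hG
      have h5 : (2:ℤ)^(G+1) ≤ A^(G+1) := pow_le_pow_left₀ (by norm_num) hA2 _
      have h6 : (G:ℤ) < 2^(G+1) := by
        have := Nat.lt_two_pow_self (n := G)
        have h7 : (2:ℕ)^G ≤ 2^(G+1) := Nat.pow_le_pow_right (by norm_num) (by omega)
        exact_mod_cast lt_of_lt_of_le this h7
      linarith
    have hTz : (∑ i ∈ T, F i) = 0 := by rw [hNT, hn0, mul_zero]
    have hmain : (∑ i ∈ T, c i * q ^ l i) * (d * (b:ℚ)^L) = 0 := by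
      rw [Finset.sum_mul]
      have : ∀ i ∈ T, c i * q ^ l i * (d * (b:ℚ)^L) = ((F i : ℤ) : ℚ) := fun i hi =>
        key i (Finset.mem_filter.1 hi).1
      rw [Finset.sum_congr rfl this]
      rw [← Int.cast_sum, hTz, Int.cast_zero]
    have hne : (d:ℚ) * (b:ℚ)^L ≠ 0 := by positivity
    exact (mul_eq_zero.1 hmain).resolve_right hne

lemma key_partition
    (q : ℚ) (hq : 1 < q) (r : ℕ) (c : Fin r → ℚ) :
    ∃ B : ℕ, ∀ (S : Finset (Fin r)) (l : Fin r → ℕ),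
      ∑ i ∈ S, c i * q ^ l i = 0 →
      ∃ π : Fin r → Fin r,
        (∀ i, i ∉ S → π i = i) ∧ (∀ i ∈ S, π i ∈ S) ∧
        (∀ i, π (π i) = π i) ∧
        (∀ i ∈ S, l (π i) ≤ l i ∧ l i ≤ l (π i) + B) ∧
        (∀ j ∈ S, π j = j → ∑ i ∈ S.filter (fun i => π i = j), c i * q ^ l i = 0) := by
  classical
  obtain ⟨d, m, hd, hm⟩ := clear_denoms r c
  set Gf : ℕ → ℕ := fun Wv => (∑ i : Fin r, (m i).natAbs) * q.den ^ Wv with hGf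
  set H : ℕ → ℕ := fun k => Nat.rec 0 (fun _ prev => prev + Gf prev) k with hH
  have hHsucc : ∀ k, H (k+1) = H k + Gf (H k) := fun k => rfl
  have hHmono : Monotone H := monotone_nat_of_le_succ (fun k => by rw [hHsucc]; omega)
  refine ⟨H r, ?_⟩
  suffices h : ∀ (N : ℕ) (S : Finset (Fin r)), S.card ≤ N → ∀ l : Fin r → ℕ,
      ∑ i ∈ S, c i * q ^ l i = 0 →
      ∃ π : Fin r → Fin r,
        (∀ i, i ∉ S → π i = i) ∧ (∀ i ∈ S, π i ∈ S) ∧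
        (∀ i, π (π i) = π i) ∧
        (∀ i ∈ S, l (π i) ≤ l i ∧ l i ≤ l (π i) + H r) ∧
        (∀ j ∈ S, π j = j → ∑ i ∈ S.filter (fun i => π i = j), c i * q ^ l i = 0) by
    intro S l hs; exact h S.card S le_rfl l hs
  intro N
  induction N with
  | zero =>
    intro S hcard l hsum
    have hSe : S = ∅ := Finset.card_eq_zero.mp (Nat.le_zero.mp hcard)
    subst hSe
    exact ⟨id, fun _ _ => rfl, by simp, fun _ => rfl, by simp, by simp⟩
  | succ N ih =>
    intro S hcard l hsum
    by_cases hSe : S = ∅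
    · subst hSe
      exact ⟨id, fun _ _ => rfl, by simp, fun _ => rfl, by simp, by simp⟩
    · obtain ⟨j₀, hj₀S, hj₀min⟩ := Finset.exists_min_image S l (Finset.nonempty_of_ne_empty hSe)
      set u := l j₀ with hu
      set Tm : ℕ → Finset (Fin r) := fun k => S.filter (fun i => l i ≤ u + H k) with hTm
      have hstep : ∃ k < r, Tm k = Tm (k+1) := by
        by_contra hcon
        push_neg at hcon
        have hgrow : ∀ k, k ≤ r → k + 1 ≤ (Tm k).card := by
          intro k
          induction k with
          | zero =>
            intro _
            have hj : j₀ ∈ Tm 0 := Finset.mem_filter.2 ⟨hj₀S, by omega⟩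
            have := Finset.card_pos.2 ⟨j₀, hj⟩
            omega
          | succ k ihk =>
            intro hk
            have hk' : k ≤ r := by omega
            have hsub : Tm k ⊆ Tm (k+1) := by
              have hmono : H k ≤ H (k+1) := hHmono (Nat.le_succ k)
              intro i hi
              rw [Finset.mem_filter] at hi ⊢
              exact ⟨hi.1, by omega⟩
            have hne : Tm k ≠ Tm (k+1) := hcon k (by omega)
            have hss : Tm k ⊂ Tm (k+1) := ssubset_of_subset_of_ne hsub hne
            have hlt := Finset.card_lt_card hss
            have := ihk hk'
            omega
        have h1 := hgrow r le_rfl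
        have h2 : (Tm r).card ≤ S.card := Finset.card_le_card (Finset.filter_subset _ _)
        have h3 : S.card ≤ r := by
          have := Finset.card_le_univ S
          simpa using this
        omega
      obtain ⟨k, hkr, hTk⟩ := hstep
      set W := H k with hW
      set T := S.filter (fun i => l i ≤ u + W) with hT
      have hTz : ∑ i ∈ T, c i * q ^ l i = 0 := by
        apply block_sum_zero q hq r c d m hd hm S l hsum u W (Gf W)
        · intro i hi; exact hj₀min i hi
        · exact le_rfl
        · intro i hi
          by_cases h : l i ≤ u + W
          · exact Or.inl h
          · right
            have hnotmem : i ∉ Tm (k+1) := by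
              rw [← hTk]
              intro hmem
              exact h (Finset.mem_filter.1 hmem).2
            have hnot : ¬ l i ≤ u + H (k+1) := fun hle => hnotmem (Finset.mem_filter.2 ⟨hi, hle⟩)
            rw [hHsucc] at hnot
            rw [hW]
            omega
      have hj₀T : j₀ ∈ T := Finset.mem_filter.2 ⟨hj₀S, by omega⟩
      set S' := S.filter (fun i => ¬ l i ≤ u + W) with hS'
      have hS'sub : S' ⊆ S := Finset.filter_subset _ _
      have hsplitc : T.card + S'.card = S.card := Finset.card_filter_add_card_filter_not _
      have hS'card : S'.card ≤ N := by
        have : 1 ≤ T.card := Finset.card_pos.2 ⟨j₀, hj₀T⟩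
        omega
      have hsum' : ∑ i ∈ S', c i * q ^ l i = 0 := by
        have hh := Finset.sum_filter_add_sum_filter_not S (fun i => l i ≤ u + W)
          (fun i => c i * q ^ l i)
        rw [← hT, ← hS'] at hh
        rw [hTz] at hh
        linarith [hh, hsum]
      obtain ⟨π', h1', h2', h3', h4', h5'⟩ := ih S' hS'card l hsum'
      have hTnotS' : ∀ i, i ∈ T → i ∉ S' := by
        intro i hi hi'
        exact (Finset.mem_filter.1 hi').2 (Finset.mem_filter.1 hi).2
      have hS'notT : ∀ i, i ∈ S' → i ∉ T := by
        intro i hi hi'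
        exact (Finset.mem_filter.1 hi).2 (Finset.mem_filter.1 hi').2
      have hST' : ∀ i, i ∈ S → i ∉ T → i ∈ S' := by
        intro i hiS hiT
        refine Finset.mem_filter.2 ⟨hiS, fun hle => hiT (Finset.mem_filter.2 ⟨hiS, hle⟩)⟩
      set π : Fin r → Fin r := fun i => if i ∈ T then j₀ else π' i with hπ
      have hπT : ∀ i, i ∈ T → π i = j₀ := by intro i hi; simp only [hπ, if_pos hi]
      have hπnT : ∀ i, i ∉ T → π i = π' i := by intro i hi; simp only [hπ, if_neg hi]
      refine ⟨π, ?_, ?_, ?_, ?_, ?_⟩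
      · intro i hiS
        have hiT : i ∉ T := fun h => hiS (Finset.mem_filter.1 h).1
        have hiS' : i ∉ S' := fun h => hiS (hS'sub h)
        rw [hπnT i hiT, h1' i hiS']
      · intro i hiS
        by_cases hiT : i ∈ T
        · rw [hπT i hiT]; exact hj₀S
        · rw [hπnT i hiT]
          exact hS'sub (h2' i (hST' i hiS hiT))
      · intro i
        by_cases hiT : i ∈ T
        · rw [hπT i hiT, hπT j₀ hj₀T]
        · rw [hπnT i hiT]
          by_cases hiS' : i ∈ S'
          · have hmem : π' i ∈ S' := h2' i hiS'
            rw [hπnT _ (hS'notT _ hmem), h3' i]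
          · rw [h1' i hiS', hπnT i hiT, h1' i hiS']
      · intro i hiS
        by_cases hiT : i ∈ T
        · rw [hπT i hiT]
          constructor
          · exact hj₀min i hiS
          · have hle : l i ≤ u + W := (Finset.mem_filter.1 hiT).2
            have hWr : W ≤ H r := hHmono (le_of_lt hkr)
            omega
        · rw [hπnT i hiT]
          exact h4' i (hST' i hiS hiT)
      · intro j hjS hπj
        by_cases hjT : j ∈ T
        · have hjj₀ : j = j₀ := by rw [← hπj, hπT j hjT]
          subst hjj₀
          have hfib : S.filter (fun i => π i = j) = T := by
            ext i
            simp only [Finset.mem_filter]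
            constructor
            · rintro ⟨hiS, hπi⟩
              by_contra hiT
              have hiS' : i ∈ S' := hST' i hiS hiT
              have : π i = π' i := hπnT i hiT
              rw [this] at hπi
              have : π' i ∈ S' := h2' i hiS'
              rw [hπi] at this
              exact hS'notT _ this hjT
            · intro hiT
              exact ⟨(Finset.mem_filter.1 hiT).1, hπT i hiT⟩
          rw [hfib]
          exact hTz
        · have hjS' : j ∈ S' := hST' j hjS hjT
          have hπ'j : π' j = j := by rw [← hπnT j hjT]; exact hπj
          have hfib : S.filter (fun i => π i = j) = S'.filter (fun i => π' i = j) := by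
            ext i
            simp only [Finset.mem_filter]
            constructor
            · rintro ⟨hiS, hπi⟩
              by_cases hiT : i ∈ T
              · exfalso
                rw [hπT i hiT] at hπi
                rw [← hπi] at hjT
                exact hjT hj₀T
              · exact ⟨hST' i hiS hiT, by rw [← hπnT i hiT]; exact hπi⟩
            · rintro ⟨hiS', hπ'i⟩
              refine ⟨hS'sub hiS', ?_⟩
              rw [hπnT i (hS'notT i hiS')]
              exact hπ'i
          rw [hfib]
          exact h5' j hjS' hπ'j

lemma coset_of_pattern (r : ℕ) (π : Fin r → Fin r) (δ : Fin r → ℕ)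
    (hπ : ∀ i, π (π i) = π i) :
    IsRectangularCoset r {l : Fin r → ℕ | ∃ k : Fin r → ℕ, ∀ i, l i = δ i + k (π i)} := by
  classical
  set reps : Finset (Fin r) := univ.filter (fun j => π j = j) with hreps
  have hmem : ∀ x : Fin r, π x ∈ reps := fun x => mem_filter.2 ⟨mem_univ _, hπ x⟩
  set E := reps.equivFin with hE
  refine ⟨reps.card, δ, fun j x => if π x = (E.symm j : Fin r) then 1 else 0, ?_, ?_, ?_, ?_⟩
  · intro j hzero
    have hfix : π (E.symm j : Fin r) = (E.symm j : Fin r) := (mem_filter.1 (E.symm j).2).2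
    have hx := congrFun hzero ((E.symm j : Fin r))
    simp [hfix] at hx
  · intro j x
    by_cases h : π x = (E.symm j : Fin r) <;> simp [h]
  · intro j j' hjj' x
    by_cases h : π x = (E.symm j : Fin r)
    · by_cases h' : π x = (E.symm j' : Fin r)
      · exact absurd (E.symm.injective (Subtype.ext (h.symm.trans h'))) hjj'
      · simp [h']
    · simp [h]
  · ext v
    simp only [Set.mem_setOf_eq]
    have hsum : ∀ (k' : Fin reps.card → ℕ) (x : Fin r),
        ∑ j, k' j * (if π x = (E.symm j : Fin r) then 1 else 0) = k' (E ⟨π x, hmem x⟩) := by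
      intro k' x
      have hiff : ∀ j, (π x = (E.symm j : Fin r)) ↔ (E ⟨π x, hmem x⟩ = j) := by
        intro j
        constructor
        · intro h
          have h2 : E.symm j = ⟨π x, hmem x⟩ := Subtype.ext h.symm
          rw [← h2, Equiv.apply_symm_apply]
        · intro h
          rw [← h, Equiv.symm_apply_apply]
      calc ∑ j, k' j * (if π x = (E.symm j : Fin r) then 1 else 0)
          = ∑ j, if E ⟨π x, hmem x⟩ = j then k' j else 0 := by
            apply Finset.sum_congr rfl
            intro j _
            by_cases h : π x = (E.symm j : Fin r)
            · rw [if_pos h, if_pos ((hiff j).1 h), mul_one]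
            · rw [if_neg h, if_neg (fun hh => h ((hiff j).2 hh)), mul_zero]
      _ = k' (E ⟨π x, hmem x⟩) := by rw [Finset.sum_ite_eq]; simp
    constructor
    · rintro ⟨k, hk⟩
      refine ⟨fun j => k (E.symm j : Fin r), ?_⟩
      funext x
      rw [hsum, hk x]
      congr 1
      rw [Equiv.symm_apply_apply]
    · rintro ⟨k', rfl⟩
      refine ⟨fun i => if h : π i = i then k' (E ⟨i, mem_filter.2 ⟨mem_univ _, h⟩⟩) else 0,
        fun x => ?_⟩
      simp only []
      rw [hsum]
      congr 1
      rw [dif_pos (hπ x)]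

/-- For `q ∈ ℚ` with `q > 1` and nonzero `c₁,...,c_r ∈ ℚ`, the solution set
`{(l₁,...,l_r) ∈ ℕ^r : c₁ q^{l₁} + ... + c_r q^{l_r} = 0}` is a finite union of
rectangular cosets in `ℕ^r`. -/
theorem solutions_finite_union_rectangular_cosets
    (q : ℚ) (hq : 1 < q) (r : ℕ) (c : Fin r → ℚ) (hc : ∀ i, c i ≠ 0) :
    ∃ (t : ℕ) (C : Fin t → Set (Fin r → ℕ)),
      (∀ i, IsRectangularCoset r (C i)) ∧
      {l : Fin r → ℕ | ∑ i : Fin r, c i * q ^ l i = 0} = ⋃ i : Fin t, C i := by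
  classical
  obtain ⟨B, hB⟩ := key_partition q hq r c
  have hq0 : q ≠ 0 := ne_of_gt (lt_trans zero_lt_one hq)
  set Valid : ((Fin r → Fin r) × (Fin r → Fin (B+1))) → Prop := fun p =>
    (∀ i, p.1 (p.1 i) = p.1 i) ∧
    (∀ j, p.1 j = j → ∑ i ∈ univ.filter (fun i => p.1 i = j), c i * q ^ (p.2 i : ℕ) = 0)
    with hValid
  set Cos : ((Fin r → Fin r) × (Fin r → Fin (B+1))) → Set (Fin r → ℕ) := fun p =>
    {l | ∃ k : Fin r → ℕ, ∀ i, l i = (p.2 i : ℕ) + k (p.1 i)} with hCos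
  set E := (Fintype.equivFin {p : ((Fin r → Fin r) × (Fin r → Fin (B+1))) // Valid p}) with hEe
  refine ⟨_, fun i => Cos (E.symm i : {p // Valid p}).1, ?_, ?_⟩
  · intro i
    exact coset_of_pattern r _ _ ((E.symm i).2.1)
  · ext l
    simp only [Set.mem_setOf_eq, Set.mem_iUnion]
    constructor
    · intro hl
      obtain ⟨π, hπ1, hπ2, hπ3, hπ4, hπ5⟩ := hB univ l (by simpa using hl)
      set δ : Fin r → Fin (B+1) :=
        fun i => ⟨l i - l (π i), by have := hπ4 i (mem_univ i); omega⟩ with hδ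
      have hδval : ∀ i, (δ i : ℕ) = l i - l (π i) := fun i => rfl
      have hvalid : Valid (π, δ) := by
        refine ⟨hπ3, ?_⟩
        intro j hj
        have h5 := hπ5 j (mem_univ j) hj
        have hfac : ∀ i ∈ univ.filter (fun i => π i = j),
            c i * q ^ l i = (c i * q ^ (δ i : ℕ)) * q ^ (l j) := by
          intro i hi
          have hij : π i = j := (mem_filter.1 hi).2
          have hb := hπ4 i (mem_univ i)
          have hli : l i = (δ i : ℕ) + l j := by rw [hδval i, hij]; rw [hij] at hb; omega
          rw [hli, pow_add]; ring
        rw [Finset.sum_congr rfl hfac, ← Finset.sum_mul] at h5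
        exact (mul_eq_zero.1 h5).resolve_right (pow_ne_zero _ hq0)
      refine ⟨E ⟨(π, δ), hvalid⟩, ?_⟩
      have hEs : (E.symm (E ⟨(π, δ), hvalid⟩)) = ⟨(π, δ), hvalid⟩ := Equiv.symm_apply_apply _ _
      rw [hEs]
      refine ⟨fun j => l j, fun i => ?_⟩
      have hb := hπ4 i (mem_univ i)
      simp only [hδval i]
      omega
    · rintro ⟨i, hi⟩
      rcases hEq : E.symm i with ⟨⟨π, δ⟩, hv⟩
      rw [hEq] at hi
      obtain ⟨k, hk⟩ := hi
      have hk' : ∀ i, l i = (δ i : ℕ) + k (π i) := hk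
      have hfw : ∑ x : Fin r, c x * q ^ l x
          = ∑ j : Fin r, ∑ x ∈ univ.filter (fun x => π x = j), c x * q ^ l x :=
        (Finset.sum_fiberwise univ π (fun x => c x * q ^ l x)).symm
      rw [hfw]
      apply Finset.sum_eq_zero
      intro j _
      by_cases hfe : (univ.filter (fun x => π x = j)).Nonempty
      · obtain ⟨x₀, hx₀⟩ := hfe
        have hx₀j : π x₀ = j := (mem_filter.1 hx₀).2
        have hjfix : π j = j := by rw [← hx₀j]; exact hv.1 x₀
        have hz := hv.2 j hjfix
        have hfac : ∀ x ∈ univ.filter (fun x => π x = j),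
            c x * q ^ l x = (c x * q ^ ((δ x : ℕ))) * q ^ (k j) := by
          intro x hx
          have hxj : π x = j := (mem_filter.1 hx).2
          rw [hk' x, hxj, pow_add]; ring
        rw [Finset.sum_congr rfl hfac, ← Finset.sum_mul, hz, zero_mul]
      · rw [Finset.not_nonempty_iff_eq_empty.1 hfe, Finset.sum_empty]
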